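/- arXiv:1909.01461 — 6 statements merged into one kernel-verified Lean document; each statement's English description precedes it below -/
import Mathlib

section
/- Let G be a bipartite graph with parts U and V whose girth is at least 12. For each u ∈ U let (A_u, B_u) be a partition of the neighborhood N_G(u) into two (possibly empty) sets, and let H be the graph on vertex set V in which v and w are adjacent if and only if there exists u ∈ U with v ∈ A_u and w ∈ B_u, or v ∈ B_u and w ∈ A_u. Then H contains no cycle of length 5. -/
open SimpleGraph Real

/-- `G` contains a copy of `F` as a subgraph, i.e. there is an injective
graph homomorphism from `F` to `G`. -/
def ContainsCopy {α β : Type*} (F : SimpleGraph α) (G : SimpleGraph β) : Prop :=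
  ∃ f : F →g G, Function.Injective f

/-- `G` is `F`-free: it contains no subgraph isomorphic to `F`. -/
def IsFreeOf {α β : Type*} (G : SimpleGraph β) (F : SimpleGraph α) : Prop :=
  ¬ ContainsCopy F G

/-- `G` has an independent set of size `t`. -/
def HasIndepSetOfSize {V : Type*} (G : SimpleGraph V) (t : ℕ) : Prop :=
  ∃ s : Finset V, s.card = t ∧ ∀ v ∈ s, ∀ w ∈ s, ¬ G.Adj v w

/-- The adjacency matrix of a simple graph over `ℝ` is Hermitian. -/
theorem adjMatrix_isHermitian {V : Type*} [Fintype V] (G : SimpleGraph V)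
    [DecidableRel G.Adj] : (G.adjMatrix ℝ).IsHermitian := by
  rw [Matrix.IsHermitian, Matrix.conjTranspose_eq_transpose_of_trivial]
  exact G.isSymm_adjMatrix

/-- `G` is an `(n,d,λ)`-graph: an `n`-vertex `d`-regular graph each of whose
adjacency-matrix eigenvalues, other than the largest one (which is `d`), has
absolute value at most `lam`. -/
def IsNDLGraph {V : Type*} [Fintype V] [DecidableEq V] (G : SimpleGraph V)
    (n d : ℕ) (lam : ℝ) : Prop :=
  letI : DecidableRel G.Adj := Classical.decRel G.Adj
  Fintype.card V = n ∧ G.IsRegularOfDegree d ∧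
    ∃ i₀ : V, (adjMatrix_isHermitian G).eigenvalues i₀ = (d : ℝ) ∧
      ∀ i : V, i ≠ i₀ → |(adjMatrix_isHermitian G).eigenvalues i| ≤ lam

/-- The number of independent sets of size `t` in `G`. -/
noncomputable def numIndepSets {V : Type*} (G : SimpleGraph V) (t : ℕ) : ℕ :=
  Nat.card {s : Finset V // s.card = t ∧ ∀ v ∈ s, ∀ w ∈ s, ¬ G.Adj v w}


section statement10Aux

variable {U V : Type*} {G : SimpleGraph (U ⊕ V)} {A B : U → Set V}

lemma no4 {U V : Type*} {G : SimpleGraph (U ⊕ V)} (hg : (12:ℕ∞) ≤ G.egirth)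
    {u0 u1 : U} {v0 v1 : V} (hu : u0 ≠ u1) (hv : v0 ≠ v1)
    (h00 : G.Adj (.inl u0) (.inr v0)) (h01 : G.Adj (.inl u0) (.inr v1))
    (h10 : G.Adj (.inl u1) (.inr v0)) (h11 : G.Adj (.inl u1) (.inr v1)) : False := by
  let c : G.Walk (.inl u0) (.inl u0) :=
    .cons h00 (.cons h10.symm (.cons h11 (.cons h01.symm .nil)))
  have hc : c.IsCycle := by
    constructor
    · constructor
      · rw [Walk.isTrail_def]
        simp [c, Sym2.eq, Sym2.rel_iff', hu, hv, hu.symm, hv.symm]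
      · simp [c]
    · simp [c, hu, hv, hu.symm, hv.symm]
  have h := SimpleGraph.le_egirth.mp hg _ c hc
  have hl : c.length = 4 := by simp [c]
  rw [hl] at h
  norm_num at h
lemma no6 (hg : (12:ℕ∞) ≤ G.egirth)
    {u0 u1 u2 : U} {v0 v1 v2 : V}
    (hu01 : u0 ≠ u1) (hu12 : u1 ≠ u2) (hu02 : u0 ≠ u2)
    (hv01 : v0 ≠ v1) (hv12 : v1 ≠ v2) (hv02 : v0 ≠ v2)
    (h00 : G.Adj (.inl u0) (.inr v0)) (h01 : G.Adj (.inl u0) (.inr v1))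
    (h11 : G.Adj (.inl u1) (.inr v1)) (h12 : G.Adj (.inl u1) (.inr v2))
    (h22 : G.Adj (.inl u2) (.inr v2)) (h20 : G.Adj (.inl u2) (.inr v0)) : False := by
  let c : G.Walk (.inl u0) (.inl u0) :=
    .cons h01 (.cons h11.symm (.cons h12 (.cons h22.symm (.cons h20 (.cons h00.symm .nil)))))
  have hc : c.IsCycle := by
    constructor
    · constructor
      · rw [Walk.isTrail_def]
        simp [c, Sym2.eq, Sym2.rel_iff', hu01, hu12, hu02, hv01, hv12, hv02,
          hu01.symm, hu12.symm, hu02.symm, hv01.symm, hv12.symm, hv02.symm]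
      · simp [c]
    · simp [c, hu01, hu12, hu02, hv01, hv12, hv02,
        hu01.symm, hu12.symm, hu02.symm, hv01.symm, hv12.symm, hv02.symm]
  have h := SimpleGraph.le_egirth.mp hg _ c hc
  have hl : c.length = 6 := by simp [c]
  rw [hl] at h
  norm_num at h

lemma no8 (hg : (12:ℕ∞) ≤ G.egirth)
    {u0 u1 u2 u3 : U} {v0 v1 v2 v3 : V}
    (hu01 : u0 ≠ u1) (hu02 : u0 ≠ u2) (hu03 : u0 ≠ u3)
    (hu12 : u1 ≠ u2) (hu13 : u1 ≠ u3) (hu23 : u2 ≠ u3)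
    (hv01 : v0 ≠ v1) (hv02 : v0 ≠ v2) (hv03 : v0 ≠ v3)
    (hv12 : v1 ≠ v2) (hv13 : v1 ≠ v3) (hv23 : v2 ≠ v3)
    (h00 : G.Adj (.inl u0) (.inr v0)) (h01 : G.Adj (.inl u0) (.inr v1))
    (h11 : G.Adj (.inl u1) (.inr v1)) (h12 : G.Adj (.inl u1) (.inr v2))
    (h22 : G.Adj (.inl u2) (.inr v2)) (h23 : G.Adj (.inl u2) (.inr v3))
    (h33 : G.Adj (.inl u3) (.inr v3)) (h30 : G.Adj (.inl u3) (.inr v0)) : False := by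
  let c : G.Walk (.inl u0) (.inl u0) :=
    .cons h01 (.cons h11.symm (.cons h12 (.cons h22.symm (.cons h23
      (.cons h33.symm (.cons h30 (.cons h00.symm .nil)))))))
  have hc : c.IsCycle := by
    constructor
    · constructor
      · rw [Walk.isTrail_def]
        simp [c, Sym2.eq, Sym2.rel_iff', hu01, hu02, hu03, hu12, hu13, hu23,
          hv01, hv02, hv03, hv12, hv13, hv23,
          hu01.symm, hu02.symm, hu03.symm, hu12.symm, hu13.symm, hu23.symm,
          hv01.symm, hv02.symm, hv03.symm, hv12.symm, hv13.symm, hv23.symm]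
      · simp [c]
    · simp [c, hu01, hu02, hu03, hu12, hu13, hu23,
        hv01, hv02, hv03, hv12, hv13, hv23,
        hu01.symm, hu02.symm, hu03.symm, hu12.symm, hu13.symm, hu23.symm,
        hv01.symm, hv02.symm, hv03.symm, hv12.symm, hv13.symm, hv23.symm]
  have h := SimpleGraph.le_egirth.mp hg _ c hc
  have hl : c.length = 8 := by simp [c]
  rw [hl] at h
  norm_num at h

lemma no10 (hg : (12:ℕ∞) ≤ G.egirth)
    {u0 u1 u2 u3 u4 : U} {v0 v1 v2 v3 v4 : V}
    (hu01 : u0 ≠ u1) (hu02 : u0 ≠ u2) (hu03 : u0 ≠ u3) (hu04 : u0 ≠ u4)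
    (hu12 : u1 ≠ u2) (hu13 : u1 ≠ u3) (hu14 : u1 ≠ u4)
    (hu23 : u2 ≠ u3) (hu24 : u2 ≠ u4) (hu34 : u3 ≠ u4)
    (hv01 : v0 ≠ v1) (hv02 : v0 ≠ v2) (hv03 : v0 ≠ v3) (hv04 : v0 ≠ v4)
    (hv12 : v1 ≠ v2) (hv13 : v1 ≠ v3) (hv14 : v1 ≠ v4)
    (hv23 : v2 ≠ v3) (hv24 : v2 ≠ v4) (hv34 : v3 ≠ v4)
    (h00 : G.Adj (.inl u0) (.inr v0)) (h01 : G.Adj (.inl u0) (.inr v1))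
    (h11 : G.Adj (.inl u1) (.inr v1)) (h12 : G.Adj (.inl u1) (.inr v2))
    (h22 : G.Adj (.inl u2) (.inr v2)) (h23 : G.Adj (.inl u2) (.inr v3))
    (h33 : G.Adj (.inl u3) (.inr v3)) (h34 : G.Adj (.inl u3) (.inr v4))
    (h44 : G.Adj (.inl u4) (.inr v4)) (h40 : G.Adj (.inl u4) (.inr v0)) : False := by
  let c : G.Walk (.inl u0) (.inl u0) :=
    .cons h01 (.cons h11.symm (.cons h12 (.cons h22.symm (.cons h23
      (.cons h33.symm (.cons h34 (.cons h44.symm (.cons h40 (.cons h00.symm .nil)))))))))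
  have hc : c.IsCycle := by
    constructor
    · constructor
      · rw [Walk.isTrail_def]
        simp [c, Sym2.eq, Sym2.rel_iff', hu01, hu02, hu03, hu04, hu12, hu13, hu14,
          hu23, hu24, hu34, hv01, hv02, hv03, hv04, hv12, hv13, hv14, hv23, hv24, hv34,
          hu01.symm, hu02.symm, hu03.symm, hu04.symm, hu12.symm, hu13.symm, hu14.symm,
          hu23.symm, hu24.symm, hu34.symm, hv01.symm, hv02.symm, hv03.symm, hv04.symm,
          hv12.symm, hv13.symm, hv14.symm, hv23.symm, hv24.symm, hv34.symm]
      · simp [c]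
    · simp [c, hu01, hu02, hu03, hu04, hu12, hu13, hu14,
        hu23, hu24, hu34, hv01, hv02, hv03, hv04, hv12, hv13, hv14, hv23, hv24, hv34,
        hu01.symm, hu02.symm, hu03.symm, hu04.symm, hu12.symm, hu13.symm, hu14.symm,
        hu23.symm, hu24.symm, hu34.symm, hv01.symm, hv02.symm, hv03.symm, hv04.symm,
        hv12.symm, hv13.symm, hv14.symm, hv23.symm, hv24.symm, hv34.symm]
  have h := SimpleGraph.le_egirth.mp hg _ c hc
  have hl : c.length = 10 := by simp [c]
  rw [hl] at h
  norm_num at h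

def Opp (A B : U → Set V) (e : Bool) (u : U) (x y : V) : Prop :=
  if e then (x ∈ A u ∧ y ∈ B u) ∨ (x ∈ B u ∧ y ∈ A u)
  else (x ∈ A u ∧ y ∈ A u) ∨ (x ∈ B u ∧ y ∈ B u)

lemma opp_comp {u : U} (hd : Disjoint (A u) (B u)) {e e' : Bool} {x y z : V}
    (h1 : Opp A B e u x y) (h2 : Opp A B e' u y z) : Opp A B (xor e e') u x z := by
  have hd' : ∀ v, v ∈ A u → v ∈ B u → False := fun v hv hv' =>
    Set.disjoint_left.mp hd hv hv'
  cases e <;> cases e' <;> unfold Opp at * <;> simp at * <;> tauto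

variable (hg : (12:ℕ∞) ≤ G.egirth)
  (hpart : ∀ u v, G.Adj (Sum.inl u) (Sum.inr v) ↔ (v ∈ A u ∨ v ∈ B u))
  (hdisj : ∀ u, Disjoint (A u) (B u))

include hpart in
lemma opp_adj_left {u : U} {e : Bool} {x y : V} (h : Opp A B e u x y) :
    G.Adj (.inl u) (.inr x) := by
  rw [hpart]; cases e <;> unfold Opp at h <;> simp at h <;> tauto

include hpart in
lemma opp_adj_right {u : U} {e : Bool} {x y : V} (h : Opp A B e u x y) :
    G.Adj (.inl u) (.inr y) := by
  rw [hpart]; cases e <;> unfold Opp at h <;> simp at h <;> tauto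

include hdisj in
lemma opp_irrefl {u : U} {x : V} (h : Opp A B true u x x) : False := by
  unfold Opp at h; simp at h
  rcases h with ⟨h1, h2⟩ | ⟨h1, h2⟩
  · exact Set.disjoint_left.mp (hdisj u) h1 h2
  · exact Set.disjoint_left.mp (hdisj u) h2 h1

include hg hpart hdisj in
lemma k2 {e0 e1 : Bool} {u0 u1 : U} {v0 v1 : V} (hv : v0 ≠ v1)
    (h0 : Opp A B e0 u0 v0 v1) (h1 : Opp A B e1 u1 v1 v0)
    (he : xor e0 e1 = true) : False := by
  by_cases h : u0 = u1
  · subst h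
    have hc := opp_comp (hdisj u0) h0 h1
    rw [he] at hc
    exact opp_irrefl hdisj hc
  · exact no4 hg h hv (opp_adj_left hpart h0) (opp_adj_right hpart h0)
      (opp_adj_right hpart h1) (opp_adj_left hpart h1)

include hg hpart hdisj in
lemma k3 {e0 e1 e2 : Bool} {u0 u1 u2 : U} {v0 v1 v2 : V}
    (hv01 : v0 ≠ v1) (hv12 : v1 ≠ v2) (hv02 : v0 ≠ v2)
    (h0 : Opp A B e0 u0 v0 v1) (h1 : Opp A B e1 u1 v1 v2) (h2 : Opp A B e2 u2 v2 v0)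
    (he : xor (xor e0 e1) e2 = true) : False := by
  by_cases h01 : u0 = u1
  · subst h01
    exact k2 hg hpart hdisj hv02 (opp_comp (hdisj u0) h0 h1) h2 he
  by_cases h12 : u1 = u2
  · subst h12
    refine k2 hg hpart hdisj hv01 h0 (opp_comp (hdisj u1) h1 h2) ?_
    revert he; cases e0 <;> cases e1 <;> cases e2 <;> decide
  by_cases h02 : u2 = u0
  · subst h02
    refine k2 hg hpart hdisj hv12.symm (opp_comp (hdisj u2) h2 h0) h1 ?_
    revert he; cases e0 <;> cases e1 <;> cases e2 <;> decide
  · exact no6 hg h01 h12 (fun h => h02 h.symm) hv01 hv12 hv02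
      (opp_adj_left hpart h0) (opp_adj_right hpart h0)
      (opp_adj_left hpart h1) (opp_adj_right hpart h1)
      (opp_adj_left hpart h2) (opp_adj_right hpart h2)

include hg hpart hdisj in
lemma k4 {e0 e1 e2 e3 : Bool} {u0 u1 u2 u3 : U} {v0 v1 v2 v3 : V}
    (hv01 : v0 ≠ v1) (hv02 : v0 ≠ v2) (hv03 : v0 ≠ v3)
    (hv12 : v1 ≠ v2) (hv13 : v1 ≠ v3) (hv23 : v2 ≠ v3)
    (h0 : Opp A B e0 u0 v0 v1) (h1 : Opp A B e1 u1 v1 v2)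
    (h2 : Opp A B e2 u2 v2 v3) (h3 : Opp A B e3 u3 v3 v0)
    (he : xor (xor (xor e0 e1) e2) e3 = true) : False := by
  by_cases h01 : u0 = u1
  · subst h01
    exact k3 hg hpart hdisj hv02 hv23 hv03 (opp_comp (hdisj u0) h0 h1) h2 h3 he
  by_cases h12 : u1 = u2
  · subst h12
    refine k3 hg hpart hdisj hv01 hv13 hv03 h0 (opp_comp (hdisj u1) h1 h2) h3 ?_
    revert he; cases e0 <;> cases e1 <;> cases e2 <;> cases e3 <;> decide
  by_cases h23 : u2 = u3
  · subst h23
    refine k3 hg hpart hdisj hv01 hv12 hv02 h0 h1 (opp_comp (hdisj u2) h2 h3) ?_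
    revert he; cases e0 <;> cases e1 <;> cases e2 <;> cases e3 <;> decide
  by_cases h30 : u3 = u0
  · subst h30
    refine k3 hg hpart hdisj hv12 hv23 hv13 h1 h2 (opp_comp (hdisj u3) h3 h0) ?_
    revert he; cases e0 <;> cases e1 <;> cases e2 <;> cases e3 <;> decide
  by_cases h02 : u0 = u2
  · exact no4 hg h01 hv12 (opp_adj_right hpart h0) (h02 ▸ opp_adj_left hpart h2)
      (opp_adj_left hpart h1) (opp_adj_right hpart h1)
  by_cases h13 : u1 = u3
  · exact no4 hg h12 hv23 (opp_adj_right hpart h1) (h13 ▸ opp_adj_left hpart h3)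
      (opp_adj_left hpart h2) (opp_adj_right hpart h2)
  · exact no8 hg h01 h02 (fun h => h30 h.symm) h12 h13 h23
      hv01 hv02 hv03 hv12 hv13 hv23
      (opp_adj_left hpart h0) (opp_adj_right hpart h0)
      (opp_adj_left hpart h1) (opp_adj_right hpart h1)
      (opp_adj_left hpart h2) (opp_adj_right hpart h2)
      (opp_adj_left hpart h3) (opp_adj_right hpart h3)

include hg hpart hdisj in
lemma k5 {e0 e1 e2 e3 e4 : Bool} {u0 u1 u2 u3 u4 : U} {v0 v1 v2 v3 v4 : V}
    (hv01 : v0 ≠ v1) (hv02 : v0 ≠ v2) (hv03 : v0 ≠ v3) (hv04 : v0 ≠ v4)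
    (hv12 : v1 ≠ v2) (hv13 : v1 ≠ v3) (hv14 : v1 ≠ v4)
    (hv23 : v2 ≠ v3) (hv24 : v2 ≠ v4) (hv34 : v3 ≠ v4)
    (h0 : Opp A B e0 u0 v0 v1) (h1 : Opp A B e1 u1 v1 v2)
    (h2 : Opp A B e2 u2 v2 v3) (h3 : Opp A B e3 u3 v3 v4) (h4 : Opp A B e4 u4 v4 v0)
    (he : xor (xor (xor (xor e0 e1) e2) e3) e4 = true) : False := by
  by_cases h01 : u0 = u1
  · subst h01
    exact k4 hg hpart hdisj hv02 hv03 hv04 hv23 hv24 hv34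
      (opp_comp (hdisj u0) h0 h1) h2 h3 h4 he
  by_cases h12 : u1 = u2
  · subst h12
    refine k4 hg hpart hdisj hv01 hv03 hv04 hv13 hv14 hv34
      h0 (opp_comp (hdisj u1) h1 h2) h3 h4 ?_
    revert he; cases e0 <;> cases e1 <;> cases e2 <;> cases e3 <;> cases e4 <;> decide
  by_cases h23 : u2 = u3
  · subst h23
    refine k4 hg hpart hdisj hv01 hv02 hv04 hv12 hv14 hv24
      h0 h1 (opp_comp (hdisj u2) h2 h3) h4 ?_
    revert he; cases e0 <;> cases e1 <;> cases e2 <;> cases e3 <;> cases e4 <;> decide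
  by_cases h34 : u3 = u4
  · subst h34
    refine k4 hg hpart hdisj hv01 hv02 hv03 hv12 hv13 hv23
      h0 h1 h2 (opp_comp (hdisj u3) h3 h4) ?_
    revert he; cases e0 <;> cases e1 <;> cases e2 <;> cases e3 <;> cases e4 <;> decide
  by_cases h40 : u4 = u0
  · subst h40
    refine k4 hg hpart hdisj hv12 hv13 hv14 hv23 hv24 hv34
      h1 h2 h3 (opp_comp (hdisj u4) h4 h0) ?_
    revert he; cases e0 <;> cases e1 <;> cases e2 <;> cases e3 <;> cases e4 <;> decide
  by_cases h02 : u0 = u2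
  · exact no4 hg h01 hv12 (opp_adj_right hpart h0) (h02 ▸ opp_adj_left hpart h2)
      (opp_adj_left hpart h1) (opp_adj_right hpart h1)
  by_cases h13 : u1 = u3
  · exact no4 hg h12 hv23 (opp_adj_right hpart h1) (h13 ▸ opp_adj_left hpart h3)
      (opp_adj_left hpart h2) (opp_adj_right hpart h2)
  by_cases h24 : u2 = u4
  · exact no4 hg h23 hv34 (opp_adj_right hpart h2) (h24 ▸ opp_adj_left hpart h4)
      (opp_adj_left hpart h3) (opp_adj_right hpart h3)
  by_cases h30 : u3 = u0
  · exact no4 hg h34 hv04.symm (opp_adj_right hpart h3) (h30 ▸ opp_adj_left hpart h0)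
      (opp_adj_left hpart h4) (opp_adj_right hpart h4)
  by_cases h41 : u4 = u1
  · exact no4 hg h40 hv01 (opp_adj_right hpart h4) (h41 ▸ opp_adj_left hpart h1)
      (opp_adj_left hpart h0) (opp_adj_right hpart h0)
  · exact no10 hg h01 h02 (fun h => h30 h.symm) (fun h => h40 h.symm)
      h12 h13 (fun h => h41 h.symm) h23 h24 h34
      hv01 hv02 hv03 hv04 hv12 hv13 hv14 hv23 hv24 hv34
      (opp_adj_left hpart h0) (opp_adj_right hpart h0)
      (opp_adj_left hpart h1) (opp_adj_right hpart h1)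
      (opp_adj_left hpart h2) (opp_adj_right hpart h2)
      (opp_adj_left hpart h3) (opp_adj_right hpart h3)
      (opp_adj_left hpart h4) (opp_adj_right hpart h4)

end statement10Aux

/-- Let `G` be a bipartite graph with parts `U` and `V` of girth at least 12.
For each `u ∈ U` let `(A u, B u)` be a partition of the neighbourhood of `u`
(a subset of `V`) into two possibly empty sets, and let `H` be the graph on
`V` where `v, w` are adjacent iff for some `u`, `v ∈ A u ∧ w ∈ B u` or
`v ∈ B u ∧ w ∈ A u`. Then `H` contains no cycle of length 5. -/
theorem statement10 {U V : Type*} (G : SimpleGraph (U ⊕ V))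
    (hbip : ∀ a b, G.Adj a b →
      (∃ u v, (a = Sum.inl u ∧ b = Sum.inr v) ∨ (a = Sum.inr v ∧ b = Sum.inl u)))
    (hgirth : (12 : ℕ∞) ≤ G.egirth)
    (A B : U → Set V)
    (hpart : ∀ u v, G.Adj (Sum.inl u) (Sum.inr v) ↔ (v ∈ A u ∨ v ∈ B u))
    (hdisj : ∀ u, Disjoint (A u) (B u))
    (H : SimpleGraph V)
    (hH : ∀ v w, H.Adj v w ↔ ∃ u, (v ∈ A u ∧ w ∈ B u) ∨ (v ∈ B u ∧ w ∈ A u)) :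
    IsFreeOf H (SimpleGraph.cycleGraph 5) := by
  rintro ⟨f, hf⟩
  have hne : ∀ i j : Fin 5, i ≠ j → f i ≠ f j := fun i j hij h => hij (hf h)
  have hadj : ∀ i j : Fin 5, j = i + 1 → H.Adj (f i) (f j) := by
    rintro i j rfl
    apply f.map_adj
    rw [SimpleGraph.cycleGraph_adj]
    right
    exact add_sub_cancel_left i 1
  have hopp : ∀ i j : Fin 5, j = i + 1 → ∃ u, Opp A B true u (f i) (f j) := by
    intro i j hij
    obtain ⟨u, hu⟩ := (hH _ _).mp (hadj i j hij)
    exact ⟨u, by unfold Opp; simpa using hu⟩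
  obtain ⟨u0, h0⟩ := hopp 0 1 (by decide)
  obtain ⟨u1, h1⟩ := hopp 1 2 (by decide)
  obtain ⟨u2, h2⟩ := hopp 2 3 (by decide)
  obtain ⟨u3, h3⟩ := hopp 3 4 (by decide)
  obtain ⟨u4, h4⟩ := hopp 4 0 (by decide)
  exact k5 hgirth hpart hdisj
    (hne 0 1 (by decide)) (hne 0 2 (by decide)) (hne 0 3 (by decide)) (hne 0 4 (by decide))
    (hne 1 2 (by decide)) (hne 1 3 (by decide)) (hne 1 4 (by decide))
    (hne 2 3 (by decide)) (hne 2 4 (by decide)) (hne 3 4 (by decide))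
    h0 h1 h2 h3 h4 (by decide)
end

section
/- Let G be a bipartite graph with parts U and V whose girth is at least 16. For each u ∈ U let (A_u, B_u) be a partition of the neighborhood N_G(u) into two (possibly empty) sets, and let H be the graph on vertex set V in which v and w are adjacent if and only if there exists u ∈ U with v ∈ A_u and w ∈ B_u, or v ∈ B_u and w ∈ A_u. Then H contains no cycle of length 7. -/
open SimpleGraph Real

private lemma tail_pairs {α : Type*} (f g : ℕ → α) :
    ∀ n, (((List.range n).flatMap fun j => [f j, g j]) ++ [f n]).tail
      = (List.range n).flatMap fun j => [g j, f (j + 1)] := by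
  intro n
  induction n with
  | zero => simp
  | succ n ih =>
    rw [List.range_succ, List.flatMap_append, List.flatMap_append]
    have h1 : (((List.range n).flatMap fun j => [f j, g j]) ++ [n].flatMap fun j => [f j, g j])
        ++ [f (n + 1)]
        = (((List.range n).flatMap fun j => [f j, g j]) ++ [f n]) ++ [g n, f (n + 1)] := by
      simp
    rw [h1, List.tail_append_of_ne_nil (by simp), ih]
    simp

private lemma no_short_cycle {U V : Type*} (G : SimpleGraph (U ⊕ V))
    (hgirth : (16 : ℕ∞) ≤ G.egirth) (k : ℕ) (hk2 : 2 ≤ k) (hk7 : k ≤ 7)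
    (v : ℕ → V) (u : ℕ → U)
    (hv : ∀ i < k, ∀ j < k, v i = v j → i = j)
    (hu : ∀ i < k, ∀ j < k, u i = u j → i = j)
    (hadj : ∀ i < k, G.Adj (Sum.inl (u i)) (Sum.inr (v i)) ∧
      G.Adj (Sum.inl (u i)) (Sum.inr (v ((i + 1) % k)))) : False := by
  have hk0 : 0 < k := by omega
  set f : ℕ → (U ⊕ V) := fun t => Sum.inr (v (t % k)) with hf
  set g : ℕ → (U ⊕ V) := fun t => Sum.inl (u (t % k)) with hg
  have build : ∀ n a, a + n = k → ∃ w : G.Walk (f a) (f k),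
      w.support = (((List.range n).flatMap fun j => [f (a + j), g (a + j)]) ++ [f k]) ∧
      w.edges = (List.range n).flatMap
        fun j => [s(f (a + j), g (a + j)), s(g (a + j), f (a + j + 1))] := by
    intro n
    induction n with
    | zero =>
      intro a ha
      have : a = k := by omega
      subst this
      exact ⟨Walk.nil, by simp, by simp⟩
    | succ n ih =>
      intro a ha
      obtain ⟨w, hs, he⟩ := ih (a + 1) (by omega)
      have h1 : G.Adj (f a) (g a) := ((hadj (a % k) (Nat.mod_lt _ hk0)).1).symm
      have h2 : G.Adj (g a) (f (a + 1)) := by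
        have := (hadj (a % k) (Nat.mod_lt _ hk0)).2
        rwa [Nat.mod_add_mod] at this
      refine ⟨Walk.cons h1 (Walk.cons h2 w), ?_, ?_⟩
      · rw [Walk.support_cons, Walk.support_cons, hs, List.range_succ_eq_map]
        simp only [List.flatMap_cons, List.flatMap_map, Function.comp_def]
        simp [Nat.add_right_comm, Nat.add_assoc, Nat.add_comm 1]
      · rw [Walk.edges_cons, Walk.edges_cons, he, List.range_succ_eq_map]
        simp only [List.flatMap_cons, List.flatMap_map, Function.comp_def]
        simp [Nat.add_right_comm, Nat.add_assoc, Nat.add_comm 1]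
  obtain ⟨w, hs, he⟩ := build k 0 (by omega)
  have hfk : f k = f 0 := by simp [hf, Nat.mod_self]
  set w' : G.Walk (f 0) (f 0) := w.copy rfl hfk with hw'
  have hs' : w'.support = (((List.range k).flatMap fun j => [f j, g j]) ++ [f k]) := by
    rw [hw', Walk.support_copy, hs]; simp
  have he' : w'.edges = (List.range k).flatMap
      fun j => [s(f j, g j), s(g j, f (j + 1))] := by
    rw [hw', Walk.edges_copy, he]; simp
  have hlen : w'.length = 2 * k := by
    rw [← Walk.length_edges, he']
    rw [List.length_flatMap]
    have : (List.map (List.length ∘ fun j => [s(f j, g j), s(g j, f (j + 1))])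
        (List.range k)) = List.replicate k 2 := by
      rw [List.eq_replicate_iff]
      simp
    simp only [Function.comp_def] at this
    rw [this, List.sum_replicate, smul_eq_mul, mul_comm]
  have hmodinj : ∀ i < k, ∀ j < k, (i + 1) % k = (j + 1) % k → i = j := by
    intro i hi j hj h
    rcases Nat.lt_or_ge (i + 1) k with h1 | h1 <;> rcases Nat.lt_or_ge (j + 1) k with h2 | h2
    · rw [Nat.mod_eq_of_lt h1, Nat.mod_eq_of_lt h2] at h; omega
    · have hh : j + 1 = k := by omega
      rw [Nat.mod_eq_of_lt h1, hh, Nat.mod_self] at h; omega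
    · have hh : i + 1 = k := by omega
      rw [Nat.mod_eq_of_lt h2, hh, Nat.mod_self] at h; omega
    · omega
  have hune : ∀ a, a < k → ∀ b, b < k → a ≠ b → g a ≠ g b := by
    intro a ha b hb hab hcon
    rw [hg] at hcon
    simp only [Sum.inl.injEq] at hcon
    rw [Nat.mod_eq_of_lt ha, Nat.mod_eq_of_lt hb] at hcon
    exact hab (hu a ha b hb hcon)
  have hfne : ∀ a, a < k → ∀ b, b < k → a ≠ b → f ((a+1) % k) ≠ f ((b+1) % k) := by
    intro a ha b hb hab hcon
    rw [hf] at hcon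
    simp only [Sum.inr.injEq] at hcon
    rw [Nat.mod_mod_of_dvd, Nat.mod_mod_of_dvd] at hcon <;> try exact dvd_refl k
    exact hab (hmodinj a ha b hb
      (hv _ (Nat.mod_lt _ hk0) _ (Nat.mod_lt _ hk0) hcon))
  have hf1 : ∀ a, f (a + 1) = f ((a + 1) % k) := by
    intro a; rw [hf]; simp [Nat.mod_mod_of_dvd]
  have ht : w'.support.tail.Nodup := by
    rw [hs', tail_pairs f g k, List.nodup_flatMap]
    constructor
    · intro j hj
      simp [hf, hg]
    · rw [List.pairwise_iff_getElem]
      intro i j hi hj hij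
      simp only [List.length_range] at hi hj
      have hik : i < k := hi
      have hjk : j < k := hj
      have hijne : i ≠ j := by omega
      simp only [Function.onFun, List.getElem_range]
      intro x hx hy
      simp only [List.mem_cons, List.not_mem_nil, or_false,
        List.mem_singleton] at hx hy
      rcases hx with rfl | rfl <;> rcases hy with h | h
      · exact hune _ hik _ hjk hijne h
      · rw [hg, hf1, hf] at h; simp at h
      · rw [hf1, hg, hf] at h; simp at h
      · rw [hf1 i, hf1 j] at h
        exact hfne _ hik _ hjk hijne h
  have htr : w'.edges.Nodup := by
    rw [he', List.nodup_flatMap]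
    constructor
    · intro j hj
      simp only [List.mem_range] at hj
      simp only [List.nodup_cons, List.mem_singleton, List.not_mem_nil, not_false_iff,
        List.nodup_nil, and_true, List.mem_cons, or_false]
      intro hcon
      rw [Sym2.eq_iff] at hcon
      rcases hcon with ⟨h1, _⟩ | ⟨h1, _⟩
      · rw [hf, hg] at h1; simp at h1
      · rw [hf1, hf] at h1
        simp only [Sum.inr.injEq] at h1
        have h2 := hv (j % k) (Nat.mod_lt _ hk0) ((j + 1) % k % k) (Nat.mod_lt _ hk0) h1
        rw [Nat.mod_eq_of_lt hj, Nat.mod_mod_of_dvd _ (dvd_refl k)] at h2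
        rcases Nat.lt_or_ge (j + 1) k with h3 | h3
        · rw [Nat.mod_eq_of_lt h3] at h2; omega
        · have hjk : j + 1 = k := by omega
          rw [hjk, Nat.mod_self] at h2; omega
    · rw [List.pairwise_iff_getElem]
      intro i j hi hj hij
      simp only [List.length_range] at hi hj
      have hik : i < k := hi
      have hjk : j < k := hj
      have hijne : i ≠ j := by omega
      simp only [Function.onFun, List.getElem_range]
      intro x hx hy
      simp only [List.mem_cons, List.not_mem_nil, or_false,
        List.mem_singleton] at hx hy
      have hgij := hune _ hik _ hjk hijne
      rcases hx with rfl | rfl <;> rcases hy with h | h <;> rw [Sym2.eq_iff] at h <;>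
        rcases h with ⟨h1, h2⟩ | ⟨h1, h2⟩
      · exact hgij h2
      · rw [hf, hg] at h1; simp at h1
      · rw [hf, hg] at h1; simp at h1
      · exact hgij h2
      · rw [hg, hf] at h1; simp at h1
      · exact hgij h1
      · exact hgij h1
      · rw [hg, hf] at h1; simp at h1
  have hcyc : w'.IsCycle := by
    rw [Walk.isCycle_def]
    refine ⟨(Walk.isTrail_def w').mpr htr, fun hnil => ?_, ht⟩
    rw [hnil] at hlen
    simp at hlen
    omega
  have h16 := SimpleGraph.le_egirth.mp hgirth _ w' hcyc
  rw [hlen] at h16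
  have hfin : (16 : ℕ) ≤ 2 * k := by exact_mod_cast h16
  omega

private lemma zmod2_add : ∀ a b : ZMod 2, a + b = 1 → a = 1 ∨ b = 1 := by decide

private lemma zmod2_self : ∀ a : ZMod 2, a + a = 0 := by decide

private lemma sum_rot (k : ℕ) (hk : 0 < k) (g : ℕ → ZMod 2) (c : ℕ) :
    ∑ n ∈ Finset.range k, g ((c + n) % k) = ∑ n ∈ Finset.range k, g n := by
  have hr : c % k < k := Nat.mod_lt _ hk
  obtain ⟨q, hq⟩ : ∃ q, k * q + c % k = c := ⟨c / k, Nat.div_add_mod c k⟩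
  have h3 : k * (q + 1) = k * q + k := by ring
  refine Finset.sum_nbij' (fun n => (c + n) % k) (fun m => (m + (k - c % k)) % k)
    ?_ ?_ ?_ ?_ ?_
  · intro n hn
    exact Finset.mem_range.mpr (Nat.mod_lt _ hk)
  · intro m hm
    exact Finset.mem_range.mpr (Nat.mod_lt _ hk)
  · intro n hn
    rw [Finset.mem_range] at hn
    show ((c + n) % k + (k - c % k)) % k = n
    rw [Nat.mod_add_mod]
    have h2 : c + n + (k - c % k) = n + k * (q + 1) := by omega
    rw [h2, Nat.add_mul_mod_self_left, Nat.mod_eq_of_lt hn]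
  · intro m hm
    rw [Finset.mem_range] at hm
    show (c + (m + (k - c % k)) % k) % k = m
    rw [Nat.add_mod_mod]
    have h2 : c + (m + (k - c % k)) = m + k * (q + 1) := by omega
    rw [h2, Nat.add_mul_mod_self_left, Nat.mod_eq_of_lt hm]
  · intro n _; rfl

private lemma key {U V : Type*} (G : SimpleGraph (U ⊕ V))
    (hgirth : (16 : ℕ∞) ≤ G.egirth) (e : V → U → ZMod 2) :
    ∀ k, 0 < k → k ≤ 7 → ∀ (v : ℕ → V) (u : ℕ → U),
    (∀ i < k, ∀ j < k, v i = v j → i = j) →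
    (∀ i < k, G.Adj (Sum.inl (u i)) (Sum.inr (v i)) ∧
      G.Adj (Sum.inl (u i)) (Sum.inr (v ((i + 1) % k)))) →
    (∑ t ∈ Finset.range k, (e (v t) (u t) + e (v ((t + 1) % k)) (u t))) = 1 → False := by
  intro k
  induction k using Nat.strong_induction_on with
  | _ k IH =>
  intro hk0 hk7 v u hv hadj hsum
  by_cases hrep : ∃ i, i < k ∧ ∃ j, j < k ∧ i < j ∧ u i = u j
  case neg =>
    have hu : ∀ i < k, ∀ j < k, u i = u j → i = j := by
      intro i hi j hj hij
      by_contra hne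
      rcases Nat.lt_or_ge i j with h | h
      · exact hrep ⟨i, hi, j, hj, h, hij⟩
      · exact hrep ⟨j, hj, i, hi, by omega, hij.symm⟩
    rcases Nat.lt_or_ge k 2 with hk1 | hk2
    · have hk : k = 1 := by omega
      subst hk
      rw [Finset.sum_range_one] at hsum
      simp only [Nat.mod_self] at hsum
      rw [zmod2_self (e (v 0) (u 0))] at hsum
      exact absurd hsum (by decide)
    · exact no_short_cycle G hgirth k hk2 hk7 v u hv hu hadj
  case pos =>
    obtain ⟨i, hi, j, hj, hij, huij⟩ := hrep
    -- generic sub-configuration step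
    have sub : ∀ s l, 0 < l → l < k →
        u ((s + l - 1) % k) = u ((s + (k - 1)) % k) →
        (∑ n ∈ Finset.range l, (e (v ((s + n) % k)) (u ((s + n) % k))
          + e (v ((s + (n + 1) % l) % k)) (u ((s + n) % k)))) = 1 → False := by
      intro s l hl0 hlk hclose hs1
      refine IH l hlk hl0 (by omega) (fun n => v ((s + n) % k)) (fun n => u ((s + n) % k))
        ?_ ?_ hs1
      · intro a ha b hb hab
        have h1 := hv _ (Nat.mod_lt _ hk0) _ (Nat.mod_lt _ hk0) hab
        have h2 : a % k = b % k := Nat.ModEq.add_left_cancel' s h1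
        rwa [Nat.mod_eq_of_lt (by omega), Nat.mod_eq_of_lt (by omega)] at h2
      · intro n hn
        have ht : (s + n) % k < k := Nat.mod_lt _ hk0
        refine ⟨(hadj _ ht).1, ?_⟩
        show G.Adj (Sum.inl (u ((s + n) % k))) (Sum.inr (v ((s + (n + 1) % l) % k)))
        rcases Nat.lt_or_ge (n + 1) l with h2 | h2
        · rw [Nat.mod_eq_of_lt h2]
          have h3 := (hadj _ ht).2
          have h4 : ((s + n) % k + 1) % k = (s + (n + 1)) % k := by
            rw [Nat.mod_add_mod, Nat.add_assoc]
          rwa [h4] at h3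
        · have hn1 : n + 1 = l := by omega
          rw [hn1, Nat.mod_self]
          have hsn : s + n = s + l - 1 := by omega
          rw [hsn, hclose]
          have h4 := (hadj ((s + (k - 1)) % k) (Nat.mod_lt _ hk0)).2
          have h5 : ((s + (k - 1)) % k + 1) % k = (s + 0) % k := by
            rw [Nat.mod_add_mod]
            have h6 : s + (k - 1) + 1 = s + 0 + k := by omega
            rw [h6, Nat.add_mod_right]
          rwa [h5] at h4
    -- the periodic edge-contribution function
    set g : ℕ → ZMod 2 :=
      fun m => e (v (m % k)) (u (m % k)) + e (v ((m + 1) % k)) (u (m % k)) with hgdef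
    -- sum over a sub-cycle equals a contiguous sum of g plus two corrections
    have C1 : ∀ s l, 0 < l →
        (∑ n ∈ Finset.range l, (e (v ((s + n) % k)) (u ((s + n) % k))
          + e (v ((s + (n + 1) % l) % k)) (u ((s + n) % k))))
        = (∑ n ∈ Finset.range l, g (s + n))
          + e (v (s % k)) (u ((s + l - 1) % k)) + e (v ((s + l) % k)) (u ((s + l - 1) % k)) := by
      intro s l hl0
      obtain ⟨l', rfl⟩ : ∃ l', l = l' + 1 := ⟨l - 1, by omega⟩
      rw [Finset.sum_range_succ, Finset.sum_range_succ (f := fun n => g (s + n))]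
      have hterm : ∀ n ∈ Finset.range l',
          (e (v ((s + n) % k)) (u ((s + n) % k))
            + e (v ((s + (n + 1) % (l' + 1)) % k)) (u ((s + n) % k))) = g (s + n) := by
        intro n hn
        rw [Finset.mem_range] at hn
        rw [Nat.mod_eq_of_lt (by omega : n + 1 < l' + 1)]
        simp only [hgdef]
        rw [← Nat.add_assoc]
      rw [Finset.sum_congr rfl hterm]
      have e1 : (l' + 1) % (l' + 1) = 0 := Nat.mod_self _
      have e2 : s + (l' + 1) - 1 = s + l' := by omega
      rw [e1, e2]
      simp only [hgdef, Nat.add_zero]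
      have e5 : s + (l' + 1) = s + l' + 1 := by omega
      rw [e5]
      generalize (∑ x ∈ Finset.range l',
        (e (v ((s + x) % k)) (u ((s + x) % k)) + e (v ((s + x + 1) % k)) (u ((s + x) % k)))) = S
      generalize e (v ((s + l') % k)) (u ((s + l') % k)) = X
      generalize e (v ((s + l' + 1) % k)) (u ((s + l') % k)) = Y
      generalize e (v (s % k)) (u ((s + l') % k)) = Z
      revert S X Y Z
      decide
    set lA := j - i with hlAdef
    set lB := k - (j - i) with hlBdef
    have hlA0 : 0 < lA := by omega
    have hlAk : lA < k := by omega
    have hlB0 : 0 < lB := by omega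
    have hlBk : lB < k := by omega
    have hcloseA : u (((i + 1) + lA - 1) % k) = u (((i + 1) + (k - 1)) % k) := by
      rw [show i + 1 + lA - 1 = j from by omega, show i + 1 + (k - 1) = i + k from by omega,
        Nat.add_mod_right, Nat.mod_eq_of_lt hj, Nat.mod_eq_of_lt hi]
      exact huij.symm
    have hcloseB : u (((j + 1) + lB - 1) % k) = u (((j + 1) + (k - 1)) % k) := by
      rw [show j + 1 + lB - 1 = i + k from by omega, show j + 1 + (k - 1) = j + k from by omega,
        Nat.add_mod_right, Nat.add_mod_right, Nat.mod_eq_of_lt hi, Nat.mod_eq_of_lt hj]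
      exact huij
    have hper : ∀ m, g (m % k) = g m := by
      intro m
      simp only [hgdef]
      rw [Nat.mod_mod_of_dvd _ (dvd_refl k), Nat.mod_add_mod]
    have hGsum : (∑ n ∈ Finset.range lA, g (i + 1 + n))
        + (∑ n ∈ Finset.range lB, g (j + 1 + n)) = 1 := by
      have h1 : ∀ n ∈ Finset.range lB, g (j + 1 + n) = g (i + 1 + (lA + n)) := by
        intro n _; congr 1; omega
      rw [Finset.sum_congr rfl h1, ← Finset.sum_range_add (fun t => g (i + 1 + t)) lA lB,
        show lA + lB = k from by omega]
      calc ∑ n ∈ Finset.range k, g (i + 1 + n)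
          = ∑ n ∈ Finset.range k, g ((i + 1 + n) % k) :=
            Finset.sum_congr rfl fun n _ => (hper _).symm
        _ = ∑ n ∈ Finset.range k, g n := sum_rot k hk0 g (i + 1)
        _ = ∑ t ∈ Finset.range k, (e (v t) (u t) + e (v ((t + 1) % k)) (u t)) := by
            refine Finset.sum_congr rfl fun t ht => ?_
            rw [Finset.mem_range] at ht
            simp only [hgdef]
            rw [Nat.mod_eq_of_lt ht]
        _ = 1 := hsum
    have hSA := C1 (i + 1) lA hlA0
    have hSB := C1 (j + 1) lB hlB0
    have mA : (i + 1 + lA - 1) % k = j := by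
      rw [show i + 1 + lA - 1 = j from by omega, Nat.mod_eq_of_lt hj]
    have mB : (j + 1 + lB - 1) % k = i := by
      rw [show j + 1 + lB - 1 = i + k from by omega, Nat.add_mod_right, Nat.mod_eq_of_lt hi]
    have mA2 : (i + 1 + lA) % k = (j + 1) % k := by
      rw [show i + 1 + lA = j + 1 from by omega]
    have mB2 : (j + 1 + lB) % k = (i + 1) % k := by
      rw [show j + 1 + lB = i + 1 + k from by omega, Nat.add_mod_right]
    rw [mA, mA2] at hSA
    rw [mB, mB2] at hSB
    rw [huij] at hSB
    have hfinal : (∑ n ∈ Finset.range lA, (e (v ((i + 1 + n) % k)) (u ((i + 1 + n) % k))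
          + e (v ((i + 1 + (n + 1) % lA) % k)) (u ((i + 1 + n) % k))))
        + (∑ n ∈ Finset.range lB, (e (v ((j + 1 + n) % k)) (u ((j + 1 + n) % k))
          + e (v ((j + 1 + (n + 1) % lB) % k)) (u ((j + 1 + n) % k)))) = 1 := by
      rw [hSA, hSB, ← hGsum]
      generalize (∑ n ∈ Finset.range lA, g (i + 1 + n)) = P
      generalize (∑ n ∈ Finset.range lB, g (j + 1 + n)) = Q
      generalize e (v ((i + 1) % k)) (u j) = X
      generalize e (v ((j + 1) % k)) (u j) = Y
      revert P Q X Y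
      decide
    rcases zmod2_add _ _ hfinal with h | h
    · exact sub (i + 1) lA hlA0 hlAk hcloseA h
    · exact sub (j + 1) lB hlB0 hlBk hcloseB h

/-- Let `G` be a bipartite graph with parts `U` and `V` of girth at least 16.
For each `u ∈ U` let `(A u, B u)` be a partition of the neighbourhood of `u`
(a subset of `V`) into two possibly empty sets, and let `H` be the graph on
`V` where `v, w` are adjacent iff for some `u`, `v ∈ A u ∧ w ∈ B u` or
`v ∈ B u ∧ w ∈ A u`. Then `H` contains no cycle of length 7. -/
theorem statement11 {U V : Type*} (G : SimpleGraph (U ⊕ V))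
    (hbip : ∀ a b, G.Adj a b →
      (∃ u v, (a = Sum.inl u ∧ b = Sum.inr v) ∨ (a = Sum.inr v ∧ b = Sum.inl u)))
    (hgirth : (16 : ℕ∞) ≤ G.egirth)
    (A B : U → Set V)
    (hpart : ∀ u v, G.Adj (Sum.inl u) (Sum.inr v) ↔ (v ∈ A u ∨ v ∈ B u))
    (hdisj : ∀ u, Disjoint (A u) (B u))
    (H : SimpleGraph V)
    (hH : ∀ v w, H.Adj v w ↔ ∃ u, (v ∈ A u ∧ w ∈ B u) ∨ (v ∈ B u ∧ w ∈ A u)) :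
    IsFreeOf H (SimpleGraph.cycleGraph 7) := by
  classical
  intro hc
  obtain ⟨f, hf⟩ := hc
  set e : V → U → ZMod 2 := fun x y => if x ∈ B y then 1 else 0 with hedef
  set vv : ℕ → V := fun n => f ⟨n % 7, Nat.mod_lt _ (by norm_num)⟩ with hvvdef
  have hadj7 : ∀ a : Fin 7,
      (SimpleGraph.cycleGraph 7).Adj a ⟨(a.val + 1) % 7, Nat.mod_lt _ (by norm_num)⟩ := by
    decide
  have hHadj : ∀ n : ℕ, H.Adj (vv n) (vv (n + 1)) := by
    intro n
    have h0 := f.map_adj (hadj7 ⟨n % 7, Nat.mod_lt _ (by norm_num)⟩)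
    have h2 : (⟨(n % 7 + 1) % 7, Nat.mod_lt _ (by norm_num)⟩ : Fin 7)
        = ⟨(n + 1) % 7, Nat.mod_lt _ (by norm_num)⟩ := Fin.ext (Nat.mod_add_mod _ _ _)
    rw [h2] at h0
    exact h0
  set uu : ℕ → U := fun n => ((hH (vv n) (vv (n + 1))).mp (hHadj n)).choose with huudef
  have hspec : ∀ n, (vv n ∈ A (uu n) ∧ vv (n + 1) ∈ B (uu n)) ∨
      (vv n ∈ B (uu n) ∧ vv (n + 1) ∈ A (uu n)) :=
    fun n => ((hH (vv n) (vv (n + 1))).mp (hHadj n)).choose_spec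
  have vvper : ∀ n : ℕ, vv ((n + 1) % 7) = vv (n + 1) := by
    intro n
    simp only [hvvdef]
    congr 1
    exact Fin.ext (Nat.mod_mod_of_dvd _ (dvd_refl 7))
  refine key G hgirth e 7 (by norm_num) (le_refl 7) vv uu ?_ ?_ ?_
  · intro a ha b hb hab
    have h1 := hf hab
    have h2 : a % 7 = b % 7 := congrArg Fin.val h1
    rwa [Nat.mod_eq_of_lt ha, Nat.mod_eq_of_lt hb] at h2
  · intro n hn
    constructor
    · refine (hpart (uu n) (vv n)).mpr ?_
      rcases hspec n with ⟨h1, _⟩ | ⟨h1, _⟩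
      · exact Or.inl h1
      · exact Or.inr h1
    · rw [vvper n]
      refine (hpart (uu n) (vv (n + 1))).mpr ?_
      rcases hspec n with ⟨_, h1⟩ | ⟨_, h1⟩
      · exact Or.inr h1
      · exact Or.inl h1
  · have hterm : ∀ t ∈ Finset.range 7,
        (e (vv t) (uu t) + e (vv ((t + 1) % 7)) (uu t)) = 1 := by
      intro t _
      rw [vvper t]
      rcases hspec t with ⟨hA1, hB1⟩ | ⟨hB1, hA1⟩
      · have h1 : e (vv t) (uu t) = 0 := by
          simp only [hedef]
          rw [if_neg (Set.disjoint_left.mp (hdisj (uu t)) hA1)]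
        have h2 : e (vv (t + 1)) (uu t) = 1 := by
          simp only [hedef]
          rw [if_pos hB1]
        rw [h1, h2, zero_add]
      · have h1 : e (vv t) (uu t) = 1 := by
          simp only [hedef]
          rw [if_pos hB1]
        have h2 : e (vv (t + 1)) (uu t) = 0 := by
          simp only [hedef]
          rw [if_neg (Set.disjoint_left.mp (hdisj (uu t)) hA1)]
        rw [h1, h2, add_zero]
    rw [Finset.sum_congr rfl hterm, Finset.sum_const, Finset.card_range, nsmul_eq_mul, mul_one]
    decide
end

section
/- Let G be a bipartite graph with parts U and V, where |U| = m, and suppose every vertex of V has degree at least d in G. For each u ∈ U, choose independently a uniformly random ordered partition (A_u, B_u) of N_G(u), and let H be the random graph on vertex set V obtained by placing a complete bipartite graph with parts A_u and B_u for each u ∈ U. Then for every fixed set I ⊆ V with |I| = t, the probability that I is an independent set in H is at most 2^{m − d·t}. -/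
open SimpleGraph Real

private lemma two_zpow_sum {α : Type*} (s : Finset α) (e : α → ℤ) :
    ∏ i ∈ s, (2:ℝ) ^ (e i) = 2 ^ (∑ i ∈ s, e i) := by
  induction s using Finset.cons_induction with
  | empty => simp
  | cons a s ha ih => rw [Finset.sum_cons, Finset.prod_cons, zpow_add₀ (by norm_num), ih]

private lemma count_const {V : Type*} [Fintype V] [DecidableEq V] (S : Finset V) :
    Nat.card {g : V → Bool // ∀ v ∈ S, ∀ w ∈ S, g v = g w}
      ≤ 2 * 2 ^ (Fintype.card V - S.card) := by
  classical
  have hinj : Function.Injective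
      (fun g : {g : V → Bool // ∀ v ∈ S, ∀ w ∈ S, g v = g w} =>
        ((if h : S.Nonempty then g.1 h.choose else true, fun v : {v : V // v ∉ S} => g.1 v.1) :
          Bool × ({v : V // v ∉ S} → Bool))) := by
    intro g1 g2 heq
    have h1 := congrArg Prod.fst heq
    have h2 := congrArg Prod.snd heq
    simp only at h1 h2
    apply Subtype.ext; funext v
    by_cases hv : v ∈ S
    · have hne : S.Nonempty := ⟨v, hv⟩
      rw [dif_pos hne, dif_pos hne] at h1
      have hc := hne.choose_spec
      calc g1.1 v = g1.1 hne.choose := g1.2 v hv _ hc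
        _ = g2.1 hne.choose := h1
        _ = g2.1 v := g2.2 _ hc v hv
    · exact congrFun h2 ⟨v, hv⟩
  have h := Nat.card_le_card_of_injective _ hinj
  refine h.trans (le_of_eq ?_)
  rw [Nat.card_eq_fintype_card]
  simp [Fintype.card_subtype_compl]

/-- Let `G` be a bipartite graph with parts `U` and `V` (given by the adjacency
relation `R` between `U` and `V`), with `|U| = m` and every vertex of `V` of
degree at least `d`. For each `u ∈ U` pick a uniformly random ordered
partition of `N_G(u)` independently (equivalently, a uniformly random
`f : U → V → Bool`, vertex `v ∈ N_G(u)` going to `A u` or `B u` according to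
`f u v`), and let `H` be the graph on `V` joining `v, w` iff for some `u`
one of them lies in `A u` and the other in `B u`. Then for every `I ⊆ V`
with `|I| = t`, the probability that `I` is independent in `H` is at most
`2^{m - d·t}`. -/
theorem statement13 {U V : Type*} [Fintype U] [Fintype V] (R : U → V → Prop)
    (m d t : ℕ) (hm : Fintype.card U = m)
    (hdeg : ∀ v : V, d ≤ Nat.card {u : U // R u v})
    (I : Finset V) (hI : I.card = t) :
    (Nat.card {f : U → V → Bool // ∀ v ∈ I, ∀ w ∈ I,
        ¬ ∃ u : U, R u v ∧ R u w ∧ f u v ≠ f u w} : ℝ) /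
      (Nat.card (U → V → Bool) : ℝ)
      ≤ (2 : ℝ) ^ ((m : ℤ) - (d : ℤ) * (t : ℤ)) := by
  classical
  set n := Fintype.card V with hn
  set s : U → ℕ := fun u => (I.filter fun v => R u v).card with hs
  set c : U → ℕ := fun u =>
    Nat.card {g : V → Bool // ∀ v ∈ I, ∀ w ∈ I, R u v → R u w → g v = g w} with hc
  -- numerator as a product
  have hnum : Nat.card {f : U → V → Bool // ∀ v ∈ I, ∀ w ∈ I,
      ¬ ∃ u : U, R u v ∧ R u w ∧ f u v ≠ f u w} = ∏ u : U, c u := by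
    rw [hc, ← Nat.card_pi]
    apply Nat.card_congr
    refine (Equiv.subtypeEquivRight ?_).trans Equiv.subtypePiEquivPi
    intro f
    constructor
    · intro h u v hv w hw huv huw
      by_contra hne
      exact h v hv w hw ⟨u, huv, huw, hne⟩
    · rintro h v hv w hw ⟨u, huv, huw, hne⟩
      exact hne (h u v hv w hw huv huw)
  -- denominator as a product
  have hden : Nat.card (U → V → Bool) = ∏ _u : U, 2 ^ n := by
    rw [Nat.card_pi]
    simp [Nat.card_fun, Nat.card_eq_fintype_card, hn]
  -- degree bound for each u
  have hsn : ∀ u, s u ≤ n :=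
    fun u => (Finset.card_le_card (Finset.filter_subset _ _)).trans
      ((Finset.card_le_univ I).trans_eq rfl)
  -- per-u count bound
  have hcount : ∀ u, c u ≤ 2 * 2 ^ (n - s u) := by
    intro u
    have hQ : ∀ g : V → Bool,
        (∀ v ∈ I, ∀ w ∈ I, R u v → R u w → g v = g w)
          ↔ (∀ v ∈ I.filter fun v => R u v, ∀ w ∈ I.filter fun v => R u v, g v = g w) := by
      intro g
      constructor
      · intro h v hv w hw
        rw [Finset.mem_filter] at hv hw
        exact h v hv.1 w hw.1 hv.2 hw.2
      · intro h v hv w hw huv huw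
        exact h v (Finset.mem_filter.2 ⟨hv, huv⟩) w (Finset.mem_filter.2 ⟨hw, huw⟩)
    have := count_const (V := V) (I.filter fun v => R u v)
    rw [hc]
    calc Nat.card {g : V → Bool // ∀ v ∈ I, ∀ w ∈ I, R u v → R u w → g v = g w}
        = Nat.card {g : V → Bool // ∀ v ∈ I.filter fun v => R u v,
            ∀ w ∈ I.filter fun v => R u v, g v = g w} :=
          Nat.card_congr (Equiv.subtypeEquivRight hQ)
      _ ≤ 2 * 2 ^ (n - s u) := this
  -- sum of degrees bound
  have hsum : (d : ℤ) * t ≤ ∑ u : U, (s u : ℤ) := by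
    have h1 : d * t ≤ ∑ u : U, s u := by
      calc d * t = ∑ _v ∈ I, d := by rw [Finset.sum_const, hI, smul_eq_mul, mul_comm]
        _ ≤ ∑ v ∈ I, (Finset.univ.filter fun u => R u v).card := by
            refine Finset.sum_le_sum fun v _ => ?_
            have := hdeg v
            rwa [Nat.card_eq_fintype_card, Fintype.card_subtype] at this
        _ = ∑ u : U, s u := by
            simp only [hs, Finset.card_filter]
            rw [Finset.sum_comm]
    exact_mod_cast (Nat.cast_le (α := ℤ)).2 h1
  -- real per-u bound
  have hreal : ∀ u : U, (c u : ℝ) / 2 ^ n ≤ (2:ℝ) ^ ((1:ℤ) - s u) := by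
    intro u
    rw [div_le_iff₀ (by positivity)]
    have h1 : (c u : ℝ) ≤ ((2 * 2 ^ (n - s u) : ℕ) : ℝ) := Nat.cast_le.2 (hcount u)
    refine h1.trans ?_
    push_cast
    rw [← zpow_natCast (2:ℝ) (n - s u), ← zpow_natCast (2:ℝ) n,
      Nat.cast_sub (hsn u),
      ← zpow_add₀ (two_ne_zero),
      show (1:ℤ) - s u + n = 1 + ((n:ℤ) - s u) by ring,
      zpow_add₀ (two_ne_zero), zpow_one]
  rw [hnum, hden]
  push_cast
  rw [← Finset.prod_div_distrib]
  calc ∏ u : U, (c u : ℝ) / 2 ^ n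
      ≤ ∏ u : U, (2:ℝ) ^ ((1:ℤ) - s u) :=
        Finset.prod_le_prod (fun u _ => by positivity) (fun u _ => hreal u)
    _ = 2 ^ (∑ u : U, ((1:ℤ) - s u)) := two_zpow_sum _ _
    _ ≤ (2 : ℝ) ^ ((m : ℤ) - (d : ℤ) * (t : ℤ)) := by
        refine zpow_le_zpow_right₀ (by norm_num) ?_
        rw [Finset.sum_sub_distrib]
        have h2 : ∑ _u : U, (1:ℤ) = m := by simp [hm]
        rw [h2]
        linarith [hsum]
end

section
/- Let G be a bipartite graph with parts U and V, where |U| = m and |V| = n, and suppose every vertex of V has degree at least d in G. Let t be a positive integer with d·t > m + t·log₂ n. Then there exists a choice of partitions (A_u, B_u) of the neighborhoods N_G(u), u ∈ U, such that the graph H on vertex set V obtained by placing a complete bipartite graph with parts A_u and B_u for each u ∈ U has no independent set of size t. -/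
open SimpleGraph Real

-- per-u counting
lemma const_count {V : Type*} [Fintype V] [DecidableEq V] (T : Finset V) :
    Fintype.card {g : V → Bool // ∀ v ∈ T, ∀ w ∈ T, g v = g w} * 2 ^ T.card
      ≤ 2 ^ (Fintype.card V + 1) := by
  classical
  rcases T.eq_empty_or_nonempty with rfl | ⟨x₀, hx₀⟩
  · have h : Fintype.card {g : V → Bool // ∀ v ∈ (∅ : Finset V), ∀ w ∈ (∅ : Finset V), g v = g w}
        ≤ 2 ^ Fintype.card V := by
      rw [Fintype.card_congr (Equiv.subtypeUnivEquiv (by simp)), Fintype.card_fun,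
        Fintype.card_bool]
    simpa using h.trans (pow_le_pow_right₀ one_le_two (Nat.le_succ _))
  · have hinj : Function.Injective
        (fun g : {g : V → Bool // ∀ v ∈ T, ∀ w ∈ T, g v = g w} =>
          ((fun x : {v : V // v ∈ Tᶜ} => g.1 x.1, g.1 x₀) :
            ({v : V // v ∈ Tᶜ} → Bool) × Bool)) := by
      rintro ⟨g, hg⟩ ⟨g', hg'⟩ h
      simp only [Prod.mk.injEq] at h
      ext v
      by_cases hv : v ∈ T
      · calc g v = g x₀ := hg v hv x₀ hx₀
          _ = g' x₀ := h.2
          _ = g' v := (hg' v hv x₀ hx₀).symm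
      · exact congrFun h.1 ⟨v, Finset.mem_compl.2 hv⟩
    have hcard := Fintype.card_le_of_injective _ hinj
    have h1 : Fintype.card (({v : V // v ∈ Tᶜ} → Bool) × Bool)
        = 2 ^ (Fintype.card V - T.card) * 2 := by
      rw [Fintype.card_prod, Fintype.card_fun, Fintype.card_bool, Fintype.card_coe,
        Finset.card_compl]
    calc Fintype.card {g : V → Bool // ∀ v ∈ T, ∀ w ∈ T, g v = g w} * 2 ^ T.card
        ≤ (2 ^ (Fintype.card V - T.card) * 2) * 2 ^ T.card := by
          exact Nat.mul_le_mul_right _ (h1 ▸ hcard)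
      _ = 2 ^ (Fintype.card V - T.card + T.card + 1) := by ring
      _ = 2 ^ (Fintype.card V + 1) := by
          rw [Nat.sub_add_cancel (T.card_le_univ.trans_eq (by simp))]

lemma key_count {U V : Type*} [Fintype U] [Fintype V] [DecidableEq U] [DecidableEq V]
    (R : U → V → Prop) [∀ u v, Decidable (R u v)] (d t : ℕ) (S : Finset V)
    (hdeg : ∀ v : V, d ≤ (Finset.univ.filter (fun u => R u v)).card)
    (hS : S.card = t) :
    (Finset.univ.filter (fun f : U → V → Bool =>
        ∀ u, ∀ v ∈ S, ∀ w ∈ S, R u v → R u w → f u v = f u w)).card * 2 ^ (d * t)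
      ≤ 2 ^ (Fintype.card U * (Fintype.card V + 1)) := by
  classical
  set T : U → Finset V := fun u => S.filter (fun v => R u v) with hT
  have hc : (Finset.univ.filter (fun f : U → V → Bool =>
        ∀ u, ∀ v ∈ S, ∀ w ∈ S, R u v → R u w → f u v = f u w)).card
      = ∏ u, Fintype.card {g : V → Bool // ∀ v ∈ T u, ∀ w ∈ T u, g v = g w} := by
    rw [← Fintype.card_subtype, ← Fintype.card_pi]
    apply Fintype.card_congr
    refine (Equiv.subtypeEquivRight (fun f => ?_)).trans (Equiv.subtypePiEquivPi)
    constructor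
    · intro h u v hv w hw
      simp only [hT, Finset.mem_filter] at hv hw
      exact h u v hv.1 w hw.1 hv.2 hw.2
    · intro h u v hv w hw hRv hRw
      exact h u v (Finset.mem_filter.2 ⟨hv, hRv⟩) w (Finset.mem_filter.2 ⟨hw, hRw⟩)
  have hsum : d * t ≤ ∑ u, (T u).card := by
    have h1 : ∑ u, (T u).card = ∑ v ∈ S, (Finset.univ.filter (fun u => R u v)).card := by
      simp only [hT, Finset.card_filter]
      exact Finset.sum_comm
    rw [h1]
    calc d * t = ∑ _v ∈ S, d := by rw [Finset.sum_const, hS, smul_eq_mul, mul_comm]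
      _ ≤ _ := Finset.sum_le_sum fun v _ => hdeg v
  calc (Finset.univ.filter (fun f : U → V → Bool =>
        ∀ u, ∀ v ∈ S, ∀ w ∈ S, R u v → R u w → f u v = f u w)).card * 2 ^ (d * t)
      ≤ (∏ u, Fintype.card {g : V → Bool // ∀ v ∈ T u, ∀ w ∈ T u, g v = g w})
          * 2 ^ (∑ u, (T u).card) := by
        rw [hc]
        exact Nat.mul_le_mul_left _ (Nat.pow_le_pow_right (by norm_num) hsum)
    _ = ∏ u, (Fintype.card {g : V → Bool // ∀ v ∈ T u, ∀ w ∈ T u, g v = g w}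
          * 2 ^ (T u).card) := by
        rw [Finset.prod_mul_distrib, Finset.prod_pow_eq_pow_sum]
    _ ≤ ∏ _u : U, 2 ^ (Fintype.card V + 1) :=
        Finset.prod_le_prod' fun u _ => const_count (T u)
    _ = 2 ^ (Fintype.card U * (Fintype.card V + 1)) := by
        rw [Finset.prod_const, ← pow_mul, Finset.card_univ, mul_comm]

lemma final_contra {n d t m : ℕ} (ht : 0 < t)
    (hdt : (m : ℝ) + (t : ℝ) * Real.logb 2 n < (d : ℝ) * t)
    (h : 2 ^ (d * t) ≤ n ^ t * 2 ^ m) : False := by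
  rcases Nat.eq_zero_or_pos n with rfl | hn
  · rw [Nat.zero_pow ht, Nat.zero_mul] at h
    simp at h
  · have hr : (2 : ℝ) ^ (d * t) ≤ (n : ℝ) ^ t * 2 ^ m := by exact_mod_cast h
    have hnr : (0 : ℝ) < (n : ℝ) := by exact_mod_cast hn
    have hlog := Real.logb_le_logb_of_le (b := 2) one_lt_two (by positivity) hr
    rw [Real.logb_mul (by positivity) (by positivity), Real.logb_pow, Real.logb_pow,
      Real.logb_pow, Real.logb_self_eq_one one_lt_two] at hlog
    push_cast at hlog
    linarith

lemma exists_good {U V : Type*} [Fintype U] [Fintype V] (R : U → V → Prop)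
    (m n d t : ℕ) (hm : Fintype.card U = m) (hn : Fintype.card V = n)
    (hdeg : ∀ v : V, d ≤ Nat.card {u : U // R u v})
    (ht : 0 < t) (hdt : (m : ℝ) + (t : ℝ) * Real.logb 2 n < (d : ℝ) * t) :
    ∃ f : U → V → Bool, ∀ S : Finset V, S.card = t →
      ¬ (∀ u, ∀ v ∈ S, ∀ w ∈ S, R u v → R u w → f u v = f u w) := by
  classical
  subst hm hn
  set m := Fintype.card U with hm
  set n := Fintype.card V with hn
  by_contra hcon
  push_neg at hcon
  have hdeg' : ∀ v : V, d ≤ (Finset.univ.filter (fun u => R u v)).card := by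
    intro v
    have := hdeg v
    rwa [Nat.card_eq_fintype_card, Fintype.card_subtype] at this
  -- covering argument
  have cover : (Finset.univ : Finset (U → V → Bool)) ⊆
      (Finset.powersetCard t (Finset.univ : Finset V)).biUnion
        (fun S => Finset.univ.filter (fun f : U → V → Bool =>
          ∀ u, ∀ v ∈ S, ∀ w ∈ S, R u v → R u w → f u v = f u w)) := by
    intro f _
    obtain ⟨S, hScard, hSind⟩ := hcon f
    exact Finset.mem_biUnion.2 ⟨S, Finset.mem_powersetCard.2 ⟨Finset.subset_univ _, hScard⟩,
      Finset.mem_filter.2 ⟨Finset.mem_univ _, hSind⟩⟩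
  have h1 : (2 ^ n) ^ m ≤ ∑ S ∈ Finset.powersetCard t (Finset.univ : Finset V),
      (Finset.univ.filter (fun f : U → V → Bool =>
        ∀ u, ∀ v ∈ S, ∀ w ∈ S, R u v → R u w → f u v = f u w)).card := by
    have := (Finset.card_le_card cover).trans (Finset.card_biUnion_le)
    rwa [Finset.card_univ, Fintype.card_fun, Fintype.card_fun, Fintype.card_bool] at this
  have h2 : (2 ^ n) ^ m * 2 ^ (d * t) ≤ n.choose t * 2 ^ (m * (n + 1)) := by
    calc (2 ^ n) ^ m * 2 ^ (d * t)
        ≤ (∑ S ∈ Finset.powersetCard t (Finset.univ : Finset V),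
            (Finset.univ.filter (fun f : U → V → Bool =>
              ∀ u, ∀ v ∈ S, ∀ w ∈ S, R u v → R u w → f u v = f u w)).card) * 2 ^ (d * t) :=
          Nat.mul_le_mul_right _ h1
      _ = ∑ S ∈ Finset.powersetCard t (Finset.univ : Finset V),
            (Finset.univ.filter (fun f : U → V → Bool =>
              ∀ u, ∀ v ∈ S, ∀ w ∈ S, R u v → R u w → f u v = f u w)).card * 2 ^ (d * t) :=
          Finset.sum_mul _ _ _
      _ ≤ ∑ _S ∈ Finset.powersetCard t (Finset.univ : Finset V), 2 ^ (m * (n + 1)) :=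
          Finset.sum_le_sum fun S hS => key_count R d t S hdeg'
            (Finset.mem_powersetCard.1 hS).2
      _ = n.choose t * 2 ^ (m * (n + 1)) := by
          rw [Finset.sum_const, smul_eq_mul, Finset.card_powersetCard, Finset.card_univ]
  have h3 : 2 ^ (d * t) ≤ n.choose t * 2 ^ m := by
    have hpos : 0 < (2 ^ n) ^ m := by positivity
    apply Nat.le_of_mul_le_mul_left _ hpos
    calc (2 ^ n) ^ m * 2 ^ (d * t) ≤ n.choose t * 2 ^ (m * (n + 1)) := h2
      _ = (2 ^ n) ^ m * (n.choose t * 2 ^ m) := by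
          rw [Nat.mul_add, Nat.mul_one, pow_add, ← pow_mul, Nat.mul_comm n m]
          ring
  exact final_contra ht hdt (h3.trans (Nat.mul_le_mul_right _ (Nat.choose_le_pow n t)))

/-- Let `G` be a bipartite graph with parts `U` and `V` (given by the adjacency
relation `R`), `|U| = m`, `|V| = n`, every vertex of `V` of degree at least
`d`, and let `t > 0` satisfy `d·t > m + t·log₂ n`. Then the neighbourhoods
`N_G(u)` can be partitioned into pairs `(A u, B u)` so that the graph `H` on
`V` obtained by placing a complete bipartite graph between `A u` and `B u`
for each `u` has no independent set of size `t`. -/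
theorem statement14 {U V : Type*} [Fintype U] [Fintype V] (R : U → V → Prop)
    (m n d t : ℕ) (hm : Fintype.card U = m) (hn : Fintype.card V = n)
    (hdeg : ∀ v : V, d ≤ Nat.card {u : U // R u v})
    (ht : 0 < t) (hdt : (m : ℝ) + (t : ℝ) * Real.logb 2 n < (d : ℝ) * t) :
    ∃ A B : U → Set V,
      (∀ u v, R u v ↔ (v ∈ A u ∨ v ∈ B u)) ∧
      (∀ u, Disjoint (A u) (B u)) ∧
      ¬ ∃ S : Finset V, S.card = t ∧ ∀ v ∈ S, ∀ w ∈ S,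
          ¬ ∃ u : U, (v ∈ A u ∧ w ∈ B u) ∨ (v ∈ B u ∧ w ∈ A u) := by
  classical
  obtain ⟨f, hf⟩ := exists_good R m n d t hm hn hdeg ht hdt
  refine ⟨fun u => {v | R u v ∧ f u v = true}, fun u => {v | R u v ∧ f u v = false},
    ?_, ?_, ?_⟩
  · intro u v
    constructor
    · intro h
      cases hb : f u v
      · exact Or.inr ⟨h, hb⟩
      · exact Or.inl ⟨h, hb⟩
    · rintro (⟨h, _⟩ | ⟨h, _⟩) <;> exact h
  · intro u
    rw [Set.disjoint_left]
    rintro v ⟨_, h1⟩ ⟨_, h2⟩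
    simp [h1] at h2
  · rintro ⟨S, hScard, hSind⟩
    apply hf S hScard
    intro u v hv w hw hRv hRw
    by_contra hne
    apply hSind v hv w hw
    refine ⟨u, ?_⟩
    cases hbv : f u v <;> cases hbw : f u w
    · rw [hbv, hbw] at hne; exact absurd rfl hne
    · exact Or.inr ⟨⟨hRv, hbv⟩, ⟨hRw, hbw⟩⟩
    · exact Or.inl ⟨⟨hRv, hbv⟩, ⟨hRw, hbw⟩⟩
    · rw [hbv, hbw] at hne; exact absurd rfl hne
end

section
/- Let G be a triangle-free (n,d,λ)-graph with n ≥ 2. Then d³ ≤ λ³·(n − 1). (Indeed, the trace of the cube of the adjacency matrix A of G is zero since G is triangle-free, and tr(A³) ≥ d³ − λ³(n−1).) -/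
open SimpleGraph Real

lemma trace_cube_eq {m : Type*} [Fintype m] [DecidableEq m] {A : Matrix m m ℝ}
    (hA : A.IsHermitian) : (A * A * A).trace = ∑ i, hA.eigenvalues i ^ 3 := by
  set U : Matrix m m ℝ := (hA.eigenvectorUnitary : Matrix m m ℝ)
  set D : Matrix m m ℝ := Matrix.diagonal (RCLike.ofReal ∘ hA.eigenvalues) with hD
  have hUU : star U * U = 1 := (Matrix.mem_unitaryGroup_iff').mp hA.eigenvectorUnitary.2
  have hUU' : U * star U = 1 := (Matrix.mem_unitaryGroup_iff).mp hA.eigenvectorUnitary.2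
  have hspec : A = U * D * star U := hA.spectral_theorem
  have h3 : A * A * A = U * (D * D * D) * star U := by
    rw [hspec]
    simp only [Matrix.mul_assoc]
    rw [← Matrix.mul_assoc (star U) U, hUU, Matrix.one_mul,
        ← Matrix.mul_assoc (star U) U, hUU, Matrix.one_mul]
  rw [h3, Matrix.trace_mul_cycle, ← Matrix.mul_assoc, hUU, Matrix.one_mul]
  rw [hD, Matrix.diagonal_mul_diagonal, Matrix.diagonal_mul_diagonal, Matrix.trace_diagonal]
  simp [pow_succ, mul_assoc]

lemma trace_cube_zero {V : Type*} [Fintype V] [DecidableEq V] (G : SimpleGraph V)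
    [DecidableRel G.Adj] (htri : G.CliqueFree 3) :
    ((G.adjMatrix ℝ) * (G.adjMatrix ℝ) * (G.adjMatrix ℝ)).trace = 0 := by
  rw [Matrix.trace]
  apply Finset.sum_eq_zero
  intro i _
  rw [Matrix.diag_apply, Matrix.mul_apply]
  apply Finset.sum_eq_zero
  intro j _
  rw [Matrix.mul_apply, Finset.sum_mul]
  apply Finset.sum_eq_zero
  intro k _
  by_cases h1 : G.Adj i k
  · by_cases h2 : G.Adj k j
    · by_cases h3 : G.Adj j i
      · exact absurd (SimpleGraph.is3Clique_triple_iff.2 ⟨h1, h3.symm, h2⟩) (htri _)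
      · simp [h3]
    · simp [h2]
  · simp [h1]

/-- A triangle-free `(n,d,λ)`-graph with `n ≥ 2` satisfies `d³ ≤ λ³(n-1)`. -/
theorem statement16 {V : Type*} [Fintype V] [DecidableEq V] (G : SimpleGraph V)
    (n d : ℕ) (lam : ℝ) (hG : IsNDLGraph G n d lam)
    (htri : G.CliqueFree 3) (hn : 2 ≤ n) :
    (d : ℝ) ^ 3 ≤ lam ^ 3 * ((n : ℝ) - 1) := by
  letI : DecidableRel G.Adj := Classical.decRel G.Adj
  obtain ⟨hcard, hreg, i₀, hi₀, hbound⟩ := hG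
  set μ := (adjMatrix_isHermitian G).eigenvalues with hμ
  have h0 : ∑ i, μ i ^ 3 = 0 := by
    rw [← trace_cube_eq (adjMatrix_isHermitian G), trace_cube_zero G htri]
  obtain ⟨j, hj⟩ : ∃ j : V, j ≠ i₀ := by
    have : 1 < Fintype.card V := by omega
    exact Fintype.exists_ne_of_one_lt_card this i₀
  have hlam : 0 ≤ lam := le_trans (abs_nonneg _) (hbound j hj)
  have hsplit : ∑ i, μ i ^ 3 = μ i₀ ^ 3 + ∑ i ∈ Finset.univ.erase i₀, μ i ^ 3 :=
    (Finset.add_sum_erase _ _ (Finset.mem_univ i₀)).symm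
  have hge : ∀ i ∈ Finset.univ.erase i₀, -(lam ^ 3) ≤ μ i ^ 3 := by
    intro i hi
    have h1 : |μ i| ≤ lam := hbound i (Finset.ne_of_mem_erase hi)
    have h2 : |μ i ^ 3| ≤ lam ^ 3 := by
      rw [abs_pow]; exact pow_le_pow_left₀ (abs_nonneg _) h1 3
    linarith [neg_abs_le (μ i ^ 3)]
  have hcarde : (Finset.univ.erase i₀).card = n - 1 := by
    rw [Finset.card_erase_of_mem (Finset.mem_univ i₀), Finset.card_univ, hcard]
  have hsum : ((n : ℝ) - 1) * (-(lam ^ 3)) ≤ ∑ i ∈ Finset.univ.erase i₀, μ i ^ 3 := by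
    have := Finset.card_nsmul_le_sum (Finset.univ.erase i₀) (fun i => μ i ^ 3)
      (-(lam ^ 3)) hge
    rw [hcarde, nsmul_eq_mul] at this
    rwa [Nat.cast_sub (by omega), Nat.cast_one] at this
  have hd : μ i₀ ^ 3 = (d : ℝ) ^ 3 := by rw [hi₀]
  nlinarith [hsum, hd, hsplit, h0]
end

section
/- Let c > 0 and let G be a triangle-free (n,d,λ)-graph with n ≥ 2 and λ ≤ c·√d. Then d ≤ c²·(n − 1)^{2/3}. -/
open SimpleGraph Real

open Matrix in
theorem aux_trace_cube {V : Type*} [Fintype V] [DecidableEq V] {A : Matrix V V ℝ}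
    (hA : A.IsHermitian) : (A ^ 3).trace = ∑ i, hA.eigenvalues i ^ 3 := by
  set U : Matrix V V ℝ := (hA.eigenvectorUnitary : Matrix V V ℝ) with hUdef
  set D : Matrix V V ℝ := diagonal (RCLike.ofReal ∘ hA.eigenvalues) with hDdef
  have hU : star U * U = 1 := (Matrix.mem_unitaryGroup_iff').mp hA.eigenvectorUnitary.2
  have h : A = U * D * star U := hA.spectral_theorem
  have h3 : A ^ 3 = U * D ^ 3 * star U := by
    rw [h]
    have : (U * D * star U) ^ 3 = U * D * (star U * U) * D * (star U * U) * D * star U := by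
      noncomm_ring
    rw [this, hU, mul_one, mul_one]
    noncomm_ring
  rw [h3, Matrix.trace_mul_cycle, hU, one_mul, hDdef, Matrix.diagonal_pow, Matrix.trace_diagonal]
  simp [Pi.pow_apply]

open Matrix in
theorem aux_trace_zero {V : Type*} [Fintype V] [DecidableEq V] (G : SimpleGraph V)
    [DecidableRel G.Adj] (htri : G.CliqueFree 3) :
    ((G.adjMatrix ℝ) ^ 3).trace = 0 := by
  have h3 : (G.adjMatrix ℝ) ^ 3 = G.adjMatrix ℝ * G.adjMatrix ℝ * G.adjMatrix ℝ := by
    rw [pow_succ, pow_two]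
  rw [h3, Matrix.trace]
  apply Finset.sum_eq_zero
  intro i _
  rw [Matrix.diag_apply, Matrix.mul_apply]
  apply Finset.sum_eq_zero
  intro k _
  rw [Matrix.mul_apply, Finset.sum_mul]
  apply Finset.sum_eq_zero
  intro j _
  by_cases h1 : G.Adj i j
  · by_cases h2 : G.Adj j k
    · by_cases h4 : G.Adj k i
      · exact absurd ((SimpleGraph.is3Clique_triple_iff).mpr ⟨h1, h4.symm, h2⟩) (htri _)
      · simp [h4]
    · simp [h2]
  · simp [h1]

set_option maxHeartbeats 1000000 in
/-- A triangle-free `(n,d,λ)`-graph with `n ≥ 2` and `λ ≤ c·√d` satisfies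
`d ≤ c²·(n-1)^{2/3}`. -/
theorem statement17 {V : Type*} [Fintype V] [DecidableEq V] (G : SimpleGraph V)
    (n d : ℕ) (lam : ℝ) (c : ℝ) (hc : 0 < c) (hG : IsNDLGraph G n d lam)
    (htri : G.CliqueFree 3) (hn : 2 ≤ n) (hlam : lam ≤ c * Real.sqrt d) :
    (d : ℝ) ≤ c ^ 2 * ((n : ℝ) - 1) ^ ((2 : ℝ) / 3) := by
  letI : DecidableRel G.Adj := Classical.decRel G.Adj
  obtain ⟨hcard, hreg, i₀, hi₀, hbound⟩ := hG
  set ev := (adjMatrix_isHermitian G).eigenvalues with hev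
  -- trace of cube is zero and equals sum of eigenvalue cubes
  have hsum : ∑ i, ev i ^ 3 = 0 := by
    rw [← aux_trace_cube (adjMatrix_isHermitian G), aux_trace_zero G htri]
  have hsplit : ev i₀ ^ 3 + ∑ i ∈ Finset.univ.erase i₀, ev i ^ 3 = 0 := by
    exact (Finset.add_sum_erase Finset.univ (fun i => ev i ^ 3) (Finset.mem_univ i₀)).trans hsum
  -- lam is nonnegative
  have hn1 : (1 : ℕ) ≤ Fintype.card V - 1 := by omega
  have hex : ∃ i : V, i ≠ i₀ := by
    have h2 : 1 < Fintype.card V := by omega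
    exact Fintype.exists_ne_of_one_lt_card h2 i₀
  obtain ⟨i₁, hi₁⟩ := hex
  have hlam0 : 0 ≤ lam := le_trans (abs_nonneg _) (hbound i₁ hi₁)
  -- key inequality d^3 ≤ (n-1) * lam^3
  have hdn : (d : ℝ) ^ 3 ≤ ((n : ℝ) - 1) * lam ^ 3 := by
    have h1 : (d : ℝ) ^ 3 = - ∑ i ∈ Finset.univ.erase i₀, ev i ^ 3 := by
      rw [← hi₀]; linarith [hsplit]
    have h2 : - ∑ i ∈ Finset.univ.erase i₀, ev i ^ 3
        ≤ ∑ i ∈ Finset.univ.erase i₀, lam ^ 3 := by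
      rw [← Finset.sum_neg_distrib]
      apply Finset.sum_le_sum
      intro i hi
      have : |ev i| ^ 3 ≤ lam ^ 3 :=
        pow_le_pow_left₀ (abs_nonneg _) (hbound i (Finset.ne_of_mem_erase hi)) 3
      calc -(ev i ^ 3) ≤ |ev i ^ 3| := neg_le_abs _
        _ = |ev i| ^ 3 := (abs_pow _ _)
        _ ≤ lam ^ 3 := this
    have h3 : ∑ i ∈ Finset.univ.erase i₀, lam ^ 3 = ((n : ℝ) - 1) * lam ^ 3 := by
      rw [Finset.sum_const, Finset.card_erase_of_mem (Finset.mem_univ i₀),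
        Finset.card_univ, hcard, nsmul_eq_mul]
      congr 1
      push_cast [Nat.cast_sub (by omega : 1 ≤ n)]
      ring
    linarith
  -- handle d = 0
  have hnR : (1 : ℝ) ≤ (n : ℝ) - 1 := by
    have : (2 : ℝ) ≤ (n : ℝ) := by exact_mod_cast hn
    linarith
  have hrpos : (0 : ℝ) < ((n : ℝ) - 1) ^ ((2 : ℝ) / 3) :=
    Real.rpow_pos_of_pos (by linarith) _
  rcases Nat.eq_zero_or_pos d with hd0 | hdpos
  · rw [hd0]
    push_cast
    positivity
  -- now d ≥ 1
  have hdR : (1 : ℝ) ≤ (d : ℝ) := by exact_mod_cast hdpos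
  have hdnn : (0 : ℝ) ≤ (d : ℝ) := by linarith
  have hsq : Real.sqrt d = (d : ℝ) ^ ((1 : ℝ) / 2) := Real.sqrt_eq_rpow _
  have hlam3 : lam ^ 3 ≤ c ^ 3 * (d : ℝ) ^ ((3 : ℝ) / 2) := by
    have h1 : lam ^ 3 ≤ (c * Real.sqrt d) ^ 3 := by
      apply pow_le_pow_left₀ hlam0 hlam
    have h2 : (c * Real.sqrt d) ^ 3 = c ^ 3 * (d : ℝ) ^ ((3 : ℝ) / 2) := by
      rw [mul_pow, hsq, ← Real.rpow_natCast ((d:ℝ) ^ ((1:ℝ)/2)) 3, ← Real.rpow_mul hdnn]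
      norm_num
    linarith
  have hd3 : (d : ℝ) ^ 3 = (d : ℝ) ^ ((3 : ℝ) / 2) * (d : ℝ) ^ ((3 : ℝ) / 2) := by
    rw [← Real.rpow_add (by linarith : (0:ℝ) < (d:ℝ))]
    norm_num
  have hpow32 : (d : ℝ) ^ ((3 : ℝ) / 2) ≤ c ^ 3 * ((n : ℝ) - 1) := by
    have hpos32 : (0 : ℝ) < (d : ℝ) ^ ((3 : ℝ) / 2) :=
      Real.rpow_pos_of_pos (by linarith) _
    have : (d : ℝ) ^ ((3 : ℝ) / 2) * (d : ℝ) ^ ((3 : ℝ) / 2)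
        ≤ (c ^ 3 * ((n : ℝ) - 1)) * (d : ℝ) ^ ((3 : ℝ) / 2) := by
      calc (d : ℝ) ^ ((3 : ℝ) / 2) * (d : ℝ) ^ ((3 : ℝ) / 2) = (d : ℝ) ^ 3 := hd3.symm
        _ ≤ ((n : ℝ) - 1) * lam ^ 3 := hdn
        _ ≤ ((n : ℝ) - 1) * (c ^ 3 * (d : ℝ) ^ ((3 : ℝ) / 2)) := by
            apply mul_le_mul_of_nonneg_left hlam3 (by linarith)
        _ = (c ^ 3 * ((n : ℝ) - 1)) * (d : ℝ) ^ ((3 : ℝ) / 2) := by ring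
    exact le_of_mul_le_mul_right this hpos32
  -- raise to power 2/3
  have hfin : ((d : ℝ) ^ ((3 : ℝ) / 2)) ^ ((2 : ℝ) / 3)
      ≤ (c ^ 3 * ((n : ℝ) - 1)) ^ ((2 : ℝ) / 3) :=
    Real.rpow_le_rpow (Real.rpow_nonneg hdnn _) hpow32 (by norm_num)
  have hL : ((d : ℝ) ^ ((3 : ℝ) / 2)) ^ ((2 : ℝ) / 3) = (d : ℝ) := by
    rw [← Real.rpow_mul hdnn]
    norm_num
  have hR : (c ^ 3 * ((n : ℝ) - 1)) ^ ((2 : ℝ) / 3)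
      = c ^ 2 * ((n : ℝ) - 1) ^ ((2 : ℝ) / 3) := by
    rw [Real.mul_rpow (by positivity) (by linarith)]
    congr 1
    rw [← Real.rpow_natCast c 3, ← Real.rpow_mul hc.le, ← Real.rpow_natCast c 2]
    norm_num
  rw [hL, hR] at hfin
  exact hfin
end
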